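/- arXiv:1112.5346 — 2 statements merged into one kernel-verified Lean document; each statement's English description precedes it below -/
import Mathlib

section
/- Let ω ∈ (0,1), h > 0, σ < 0 with 2 + σh² > 0, and β ≥ 0, and set σ̃ = σ(1+βi). The θ = 0 value of the weighted Jacobi Fourier symbol satisfies |1 - ω + 2ω/(2+σ̃h²)| ≤ 1 if and only if β ≥ √(4/((ω-2)σh²) - 1), provided the quantity under the square root is nonnegative. -/
theorem stmt8 (ω h σ β : ℝ) (hω : ω ∈ Set.Ioo (0 : ℝ) 1) (hh : 0 < h) (hσ : σ < 0)
    (hpos : 0 < 2 + σ * h ^ 2) (hβ : 0 ≤ β)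
    (hrad : 0 ≤ 4 / ((ω - 2) * σ * h ^ 2) - 1) :
    ‖(1 - (ω : ℂ) + 2 * (ω : ℂ) /
        (2 + ((σ : ℂ) * (1 + β * Complex.I)) * (h : ℂ) ^ 2))‖ ≤ 1 ↔
      Real.sqrt (4 / ((ω - 2) * σ * h ^ 2) - 1) ≤ β := by
  obtain ⟨hω0, hω1⟩ := hω
  set D : ℂ := 2 + ((σ : ℂ) * (1 + β * Complex.I)) * (h : ℂ) ^ 2 with hDdef
  have hDre : D.re = 2 + σ * h ^ 2 := by
    simp [hDdef, ← Complex.ofReal_pow]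
  have hDim : D.im = σ * β * h ^ 2 := by
    simp [hDdef, ← Complex.ofReal_pow]
  have hD0 : D ≠ 0 := by
    intro hc
    rw [hc, Complex.zero_re] at hDre
    linarith
  have hk : 0 < (ω - 2) * σ * h ^ 2 := by
    have : 0 < (ω - 2) * σ := mul_pos_of_neg_of_neg (by linarith) hσ
    positivity
  have hωa : 0 < ω * (-(σ * h ^ 2)) := by
    have : 0 < -(σ * h ^ 2) := by nlinarith [sq_nonneg h]
    exact mul_pos hω0 this
  have hrw : 1 - (ω : ℂ) + 2 * (ω : ℂ) / D = ((1 - ω) * D + 2 * ω) / D := by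
    field_simp
  set N : ℂ := (1 - ω) * D + 2 * ω with hNdef
  have hNre : N.re = (1 - ω) * (2 + σ * h ^ 2) + 2 * ω := by
    simp [hNdef, hDre]
  have hNim : N.im = (1 - ω) * (σ * β * h ^ 2) := by
    simp [hNdef, hDim]
  rw [hrw, norm_div, div_le_one (norm_pos_iff.mpr hD0),
    Complex.norm_def, Complex.norm_def,
    Real.sqrt_le_sqrt_iff (Complex.normSq_nonneg _),
    Real.sqrt_le_iff, and_iff_right hβ,
    Complex.normSq_apply, Complex.normSq_apply, hNre, hNim, hDre, hDim]
  constructor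
  · intro hle
    have key : 0 ≤ (β ^ 2 + 1) * ((ω - 2) * σ * h ^ 2) - 4 := by
      by_contra hc
      push_neg at hc
      nlinarith [mul_pos hωa (by linarith : (0:ℝ) < 4 - (β ^ 2 + 1) * ((ω - 2) * σ * h ^ 2))]
    rw [sub_le_iff_le_add, div_le_iff₀ hk]
    linarith
  · intro hle
    have h4 : 4 ≤ (β ^ 2 + 1) * ((ω - 2) * σ * h ^ 2) := by
      have := (div_le_iff₀ hk).mp (by linarith : 4 / ((ω - 2) * σ * h ^ 2) ≤ β ^ 2 + 1)
      linarith
    nlinarith [mul_nonneg hωa.le (by linarith : (0:ℝ) ≤ (β ^ 2 + 1) * ((ω - 2) * σ * h ^ 2) - 4)]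
end

section
/- Let ω ∈ (0,1), h > 0, σ < 0 and β ≥ 0 with σ̃ = σ(1+βi). The θ = π value of the weighted Jacobi Fourier symbol satisfies |1 - ω - 2ω/(2+σ̃h²)| ≤ 1 if and only if β² ≥ -(ω(4+σh²)² - 2(2+σh²)(4+σh²)) / ((ω-2)(σh²)²), provided the right-hand side is nonnegative. -/
theorem stmt9 (ω h σ β : ℝ) (hω : ω ∈ Set.Ioo (0 : ℝ) 1) (hh : 0 < h) (hσ : σ < 0) (hβ : 0 ≤ β)
    (hden : (2 : ℂ) + ((σ : ℂ) * (1 + β * Complex.I)) * (h : ℂ) ^ 2 ≠ 0)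
    (hrad : 0 ≤ -(ω * (4 + σ * h ^ 2) ^ 2 - 2 * (2 + σ * h ^ 2) * (4 + σ * h ^ 2)) /
        ((ω - 2) * (σ * h ^ 2) ^ 2)) :
    ‖1 - (ω : ℂ) - 2 * (ω : ℂ) /
        (2 + ((σ : ℂ) * (1 + β * Complex.I)) * (h : ℂ) ^ 2)‖ ≤ 1 ↔
      -(ω * (4 + σ * h ^ 2) ^ 2 - 2 * (2 + σ * h ^ 2) * (4 + σ * h ^ 2)) /
          ((ω - 2) * (σ * h ^ 2) ^ 2) ≤ β ^ 2 := by
  obtain ⟨hω0, hω1⟩ := hω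
  have hs : σ * h ^ 2 < 0 := mul_neg_of_neg_of_pos hσ (pow_pos hh 2)
  have hs2 : 0 < (σ * h ^ 2) ^ 2 := by rw [sq]; exact mul_pos_of_neg_of_neg hs hs
  have hneg : (ω - 2) * (σ * h ^ 2) ^ 2 < 0 :=
    mul_neg_of_neg_of_pos (by linarith) hs2
  set D : ℂ := 2 + ((σ : ℂ) * (1 + β * Complex.I)) * (h : ℂ) ^ 2 with hDdef
  have hrw : 1 - (ω : ℂ) - 2 * (ω : ℂ) / D = ((1 - ω) * D - 2 * ω) / D := by
    field_simp
  rw [hrw, norm_div, div_le_one (norm_pos_iff.mpr hden)]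
  have habs : ‖(1 - (ω : ℂ)) * D - 2 * ω‖ ≤ ‖D‖ ↔
      Complex.normSq ((1 - (ω : ℂ)) * D - 2 * ω) ≤ Complex.normSq D := by
    rw [← Complex.sq_norm, ← Complex.sq_norm]
    exact (pow_le_pow_iff_left₀ (norm_nonneg _) (norm_nonneg _) two_ne_zero).symm
  rw [habs]
  have hD2 : D = ((2 + σ * h ^ 2 : ℝ) : ℂ) + ((σ * β * h ^ 2 : ℝ) : ℂ) * Complex.I := by
    rw [hDdef]; push_cast; ring
  have hN : (1 - (ω : ℂ)) * D - 2 * ω =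
      (((1 - ω) * (2 + σ * h ^ 2) - 2 * ω : ℝ) : ℂ) +
        (((1 - ω) * (σ * β * h ^ 2) : ℝ) : ℂ) * Complex.I := by
    rw [hDdef]; push_cast; ring
  rw [hN, hD2, Complex.normSq_add_mul_I, Complex.normSq_add_mul_I,
    div_le_iff_of_neg hneg]
  constructor
  · intro hx
    nlinarith [mul_pos hω0 (show (0:ℝ) < 2 - ω by linarith), sq_nonneg β, hs2,
      mul_pos hω0 hs2]
  · intro hx
    nlinarith [mul_pos hω0 (show (0:ℝ) < 2 - ω by linarith), sq_nonneg β, hs2,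
      mul_pos hω0 hs2]
end
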